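/- Let p1, p2, p3 ∈ (1,∞) with 1/p1 + 1/p2 + 1/p3 = 2. There exists a constant C > 0 such that for all f ∈ L^{p1,∞}(ℝ^N), g ∈ L^{p2}(ℝ^N), h ∈ L^{p3}(ℝ^N), the function (f∗g)·h is integrable and ‖(f∗g)h‖_{L^1} ≤ C·‖f‖_{L^{p1,∞}}·‖g‖_{L^{p2}}·‖h‖_{L^{p3}}. -/

import Mathlib

open MeasureTheory ENNReal Set

/-- Distribution function `λ_f(t) = μ_L({|f| > t})`. -/
noncomputable def distFn (N : ℕ) (f : EuclideanSpace ℝ (Fin N) → ℝ) (t : ℝ) : ℝ≥0∞ :=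
  volume {x | t < |f x|}

/-- Weak `L^p` quasi-norm `sup_{t>0} t · λ_f(t)^{1/p}`. -/
noncomputable def weakNorm (N : ℕ) (f : EuclideanSpace ℝ (Fin N) → ℝ) (p : ℝ) : ℝ≥0∞ :=
  ⨆ t ∈ Ioi (0:ℝ), ENNReal.ofReal t * (distFn N f t) ^ (1 / p)

namespace WY

noncomputable def ind (r : ℝ) (t : ℝ) : ℝ≥0∞ := if t < r then 1 else 0

lemma ind_le_one (r t : ℝ) : ind r t ≤ 1 := by
  unfold ind; split <;> simp

lemma meas_ind {α} [MeasurableSpace α] {r s : α → ℝ} (hr : Measurable r) (hs : Measurable s) :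
    Measurable fun a => ind (r a) (s a) :=
  Measurable.ite (measurableSet_lt hs hr) measurable_const measurable_const

lemma layer (r : ℝ) : ∫⁻ t in Ioi (0:ℝ), ind r t = ENNReal.ofReal r := by
  have : (fun t => ind r t) = (Iio r).indicator (fun _ => (1:ℝ≥0∞)) := by
    ext t; simp [ind, Set.indicator_apply, Set.mem_Iio]
  rw [this, lintegral_indicator measurableSet_Iio]
  rw [Measure.restrict_restrict measurableSet_Iio]
  simp only [lintegral_const, Measure.restrict_apply MeasurableSet.univ, Set.univ_inter, one_mul]
  rw [Set.Iio_inter_Ioi, Real.volume_Ioo, sub_zero]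

lemma lint_ind {N : ℕ} {f : EuclideanSpace ℝ (Fin N) → ℝ} (hf : Measurable f) (t : ℝ) :
    ∫⁻ z, ind (|f z|) t = distFn N f t := by
  have : (fun z => ind (|f z|) t) = ({z | t < |f z|}).indicator (fun _ => (1:ℝ≥0∞)) := by
    ext z; simp [ind, Set.indicator_apply]
  rw [this]
  exact lintegral_indicator_one (measurableSet_lt measurable_const hf.abs)


variable {N : ℕ} {f g h : EuclideanSpace ℝ (Fin N) → ℝ}

noncomputable def J (f g h : EuclideanSpace ℝ (Fin N) → ℝ) (t u v : ℝ) : ℝ≥0∞ :=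
  ∫⁻ x, ∫⁻ y, ind (|f (x - y)|) t * ind (|g y|) u * ind (|h x|) v

lemma J_le_bc (hg : Measurable g) (hh : Measurable h) (t u v : ℝ) :
    J f g h t u v ≤ distFn N g u * distFn N h v := by
  unfold J
  calc ∫⁻ x, ∫⁻ y, ind (|f (x - y)|) t * ind (|g y|) u * ind (|h x|) v
      ≤ ∫⁻ x, ∫⁻ y, ind (|g y|) u * ind (|h x|) v := by
        refine lintegral_mono fun x => lintegral_mono fun y => ?_
        simpa using mul_le_mul' (mul_le_mul' (ind_le_one (|f (x - y)|) t)
          (le_refl (ind (|g y|) u))) (le_refl (ind (|h x|) v))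
    _ = ∫⁻ x, distFn N g u * ind (|h x|) v := by
        refine lintegral_congr fun x => ?_
        rw [lintegral_mul_const _ (meas_ind hg.abs measurable_const), lint_ind hg]
    _ = distFn N g u * distFn N h v := by
        rw [lintegral_const_mul _ (meas_ind hh.abs measurable_const), lint_ind hh]

lemma J_le_ac (hf : Measurable f) (hh : Measurable h) (t u v : ℝ) :
    J f g h t u v ≤ distFn N f t * distFn N h v := by
  unfold J
  calc ∫⁻ x, ∫⁻ y, ind (|f (x - y)|) t * ind (|g y|) u * ind (|h x|) v
      ≤ ∫⁻ x, ∫⁻ y, ind (|f (x - y)|) t * ind (|h x|) v := by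
        refine lintegral_mono fun x => lintegral_mono fun y => ?_
        simpa using mul_le_mul' (mul_le_mul' (le_refl (ind (|f (x - y)|) t))
          (ind_le_one (|g y|) u)) (le_refl (ind (|h x|) v))
    _ = ∫⁻ x, distFn N f t * ind (|h x|) v := by
        refine lintegral_congr fun x => ?_
        have m : Measurable fun y => ind (|f (x - y)|) t :=
          meas_ind (hf.abs.comp (measurable_const.sub measurable_id)) measurable_const
        rw [lintegral_mul_const _ m]
        congr 1
        rw [(Measure.measurePreserving_sub_left volume x).lintegral_comp
          (meas_ind hf.abs measurable_const)]
        exact lint_ind hf t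
    _ = distFn N f t * distFn N h v := by
        rw [lintegral_const_mul _ (meas_ind hh.abs measurable_const), lint_ind hh]

lemma J_le_ab (hf : Measurable f) (hg : Measurable g) (t u v : ℝ) :
    J f g h t u v ≤ distFn N f t * distFn N g u := by
  unfold J
  calc ∫⁻ x, ∫⁻ y, ind (|f (x - y)|) t * ind (|g y|) u * ind (|h x|) v
      ≤ ∫⁻ x, ∫⁻ y, ind (|f (x - y)|) t * ind (|g y|) u := by
        refine lintegral_mono fun x => lintegral_mono fun y => ?_
        simpa using mul_le_mul' (le_refl (ind (|f (x - y)|) t * ind (|g y|) u)) (ind_le_one (|h x|) v)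
    _ = ∫⁻ y, ∫⁻ x, ind (|f (x - y)|) t * ind (|g y|) u := by
        refine lintegral_lintegral_swap ?_
        exact ((meas_ind (hf.abs.comp (measurable_fst.sub measurable_snd)) measurable_const).mul
          (meas_ind (hg.abs.comp measurable_snd) measurable_const)).aemeasurable
    _ = ∫⁻ y, distFn N f t * ind (|g y|) u := by
        refine lintegral_congr fun y => ?_
        have m : Measurable fun x => ind (|f (x - y)|) t :=
          meas_ind (hf.abs.comp (measurable_id.sub measurable_const)) measurable_const
        rw [lintegral_mul_const _ m]
        congr 1
        have mp : MeasurePreserving (fun x : EuclideanSpace ℝ (Fin N) => x - y) volume volume := by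
          simpa [sub_eq_add_neg] using
            measurePreserving_add_right (volume : Measure (EuclideanSpace ℝ (Fin N))) (-y)
        rw [mp.lintegral_comp (meas_ind hf.abs measurable_const)]
        exact lint_ind hf t
    _ = distFn N f t * distFn N g u := by
        rw [lintegral_const_mul _ (meas_ind hg.abs measurable_const), lint_ind hg]


variable {N : ℕ} {f g h : EuclideanSpace ℝ (Fin N) → ℝ}

lemma exp (hf : Measurable f) (hg : Measurable g) (hh : Measurable h) :
    ∫⁻ x, (∫⁻ y, ENNReal.ofReal |f (x - y)| * ENNReal.ofReal |g y|) * ENNReal.ofReal |h x|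
    = ∫⁻ v in Ioi (0:ℝ), ∫⁻ u in Ioi (0:ℝ), ∫⁻ t in Ioi (0:ℝ), J f g h t u v := by
  unfold J
  have mF : Measurable fun z : EuclideanSpace ℝ (Fin N) => ENNReal.ofReal |f z| :=
    ENNReal.measurable_ofReal.comp hf.abs
  have mG : Measurable fun z : EuclideanSpace ℝ (Fin N) => ENNReal.ofReal |g z| :=
    ENNReal.measurable_ofReal.comp hg.abs
  have msub : Measurable fun p : EuclideanSpace ℝ (Fin N) × EuclideanSpace ℝ (Fin N) => p.1 - p.2 :=
    measurable_fst.sub measurable_snd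
  have mker : Measurable fun p : EuclideanSpace ℝ (Fin N) × EuclideanSpace ℝ (Fin N) =>
      ENNReal.ofReal |f (p.1 - p.2)| * ENNReal.ofReal |g p.2| :=
    (mF.comp msub).mul (mG.comp measurable_snd)
  have mI1 : Measurable fun x => ∫⁻ y, ENNReal.ofReal |f (x - y)| * ENNReal.ofReal |g y| :=
    mker.lintegral_prod_right'
  -- Step 1: expand h
  have step1 : ∫⁻ x, (∫⁻ y, ENNReal.ofReal |f (x - y)| * ENNReal.ofReal |g y|) * ENNReal.ofReal |h x|
      = ∫⁻ v in Ioi (0:ℝ), ∫⁻ x, (∫⁻ y, ENNReal.ofReal |f (x - y)| * ENNReal.ofReal |g y|) * ind (|h x|) v := by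
    rw [← lintegral_lintegral_swap]
    · refine lintegral_congr fun x => ?_
      rw [← layer |h x|, ← lintegral_const_mul]
      exact meas_ind measurable_const measurable_id
    · exact ((mI1.comp measurable_fst).mul
        (meas_ind (hh.abs.comp measurable_fst) measurable_snd)).aemeasurable
  rw [step1]
  refine lintegral_congr fun v => ?_
  -- Step 2: expand g
  have step2 : ∫⁻ x, (∫⁻ y, ENNReal.ofReal |f (x - y)| * ENNReal.ofReal |g y|) * ind (|h x|) v
      = ∫⁻ u in Ioi (0:ℝ), ∫⁻ x, ∫⁻ y,
          ENNReal.ofReal |f (x - y)| * ind (|g y|) u * ind (|h x|) v := by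
    have e1 : ∀ x, (∫⁻ y, ENNReal.ofReal |f (x - y)| * ENNReal.ofReal |g y|) * ind (|h x|) v
        = ∫⁻ u in Ioi (0:ℝ), ∫⁻ y, ENNReal.ofReal |f (x - y)| * ind (|g y|) u * ind (|h x|) v := by
      intro x
      have m1 : Measurable fun y => ENNReal.ofReal |f (x - y)| * ENNReal.ofReal |g y| :=
        (mF.comp (measurable_const.sub measurable_id)).mul mG
      rw [← lintegral_mul_const _ m1]
      calc ∫⁻ y, ENNReal.ofReal |f (x - y)| * ENNReal.ofReal |g y| * ind (|h x|) v
          = ∫⁻ y, ∫⁻ u in Ioi (0:ℝ), ENNReal.ofReal |f (x - y)| * ind (|g y|) u * ind (|h x|) v := by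
            refine lintegral_congr fun y => ?_
            symm
            have mi : Measurable fun u : ℝ => ind (|g y|) u := meas_ind measurable_const measurable_id
            rw [lintegral_mul_const _ (mi.const_mul _), lintegral_const_mul _ mi, layer]
        _ = ∫⁻ u in Ioi (0:ℝ), ∫⁻ y, ENNReal.ofReal |f (x - y)| * ind (|g y|) u * ind (|h x|) v := by
            refine lintegral_lintegral_swap ?_
            exact (((mF.comp ((measurable_const.sub measurable_fst))).mul
              (meas_ind (hg.abs.comp measurable_fst) measurable_snd)).mul measurable_const).aemeasurable
    calc ∫⁻ x, (∫⁻ y, ENNReal.ofReal |f (x - y)| * ENNReal.ofReal |g y|) * ind (|h x|) v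
        = ∫⁻ x, ∫⁻ u in Ioi (0:ℝ), ∫⁻ y,
            ENNReal.ofReal |f (x - y)| * ind (|g y|) u * ind (|h x|) v := lintegral_congr e1
      _ = ∫⁻ u in Ioi (0:ℝ), ∫⁻ x, ∫⁻ y,
            ENNReal.ofReal |f (x - y)| * ind (|g y|) u * ind (|h x|) v := by
          refine lintegral_lintegral_swap ?_
          have : Measurable fun q : (EuclideanSpace ℝ (Fin N) × ℝ) × EuclideanSpace ℝ (Fin N) =>
              ENNReal.ofReal |f (q.1.1 - q.2)| * ind (|g q.2|) q.1.2 * ind (|h q.1.1|) v :=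
            ((mF.comp ((measurable_fst.comp measurable_fst).sub measurable_snd)).mul
              (meas_ind (hg.abs.comp measurable_snd) (measurable_snd.comp measurable_fst))).mul
              (meas_ind (hh.abs.comp (measurable_fst.comp measurable_fst)) measurable_const)
          exact this.lintegral_prod_right'.aemeasurable
  rw [step2]
  refine lintegral_congr fun u => ?_
  calc ∫⁻ x, ∫⁻ y, ENNReal.ofReal |f (x - y)| * ind (|g y|) u * ind (|h x|) v
      = ∫⁻ x, ∫⁻ y, ∫⁻ t in Ioi (0:ℝ), ind (|f (x - y)|) t * ind (|g y|) u * ind (|h x|) v := by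
        refine lintegral_congr fun x => lintegral_congr fun y => ?_
        symm
        have mi : Measurable fun t : ℝ => ind (|f (x - y)|) t := meas_ind measurable_const measurable_id
        calc ∫⁻ t in Ioi (0:ℝ), ind (|f (x - y)|) t * ind (|g y|) u * ind (|h x|) v
            = ∫⁻ t in Ioi (0:ℝ), ind (|f (x - y)|) t * (ind (|g y|) u * ind (|h x|) v) := by
              simp_rw [mul_assoc]
          _ = ENNReal.ofReal |f (x - y)| * (ind (|g y|) u * ind (|h x|) v) := by
              rw [lintegral_mul_const _ mi, layer]
          _ = ENNReal.ofReal |f (x - y)| * ind (|g y|) u * ind (|h x|) v := by rw [mul_assoc]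
    _ = ∫⁻ x, ∫⁻ t in Ioi (0:ℝ), ∫⁻ y, ind (|f (x - y)|) t * ind (|g y|) u * ind (|h x|) v := by
        refine lintegral_congr fun x => lintegral_lintegral_swap ?_
        exact (((meas_ind (hf.abs.comp (measurable_const.sub measurable_fst)) measurable_snd).mul
          (meas_ind (hg.abs.comp measurable_fst) measurable_const)).mul
          (meas_ind measurable_const measurable_const)).aemeasurable
    _ = ∫⁻ t in Ioi (0:ℝ), ∫⁻ x, ∫⁻ y, ind (|f (x - y)|) t * ind (|g y|) u * ind (|h x|) v := by
        refine lintegral_lintegral_swap ?_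
        have : Measurable fun q : (EuclideanSpace ℝ (Fin N) × ℝ) × EuclideanSpace ℝ (Fin N) =>
            ind (|f (q.1.1 - q.2)|) q.1.2 * ind (|g q.2|) u * ind (|h q.1.1|) v :=
          ((meas_ind (hf.abs.comp ((measurable_fst.comp measurable_fst).sub measurable_snd))
              (measurable_snd.comp measurable_fst)).mul
            (meas_ind (hg.abs.comp measurable_snd) measurable_const)).mul
            (meas_ind (hh.abs.comp (measurable_fst.comp measurable_fst)) measurable_const)
        exact this.lintegral_prod_right'.aemeasurable


lemma tail_lintegral {p1 t0 : ℝ} (hp1 : 1 < p1) (ht0 : 0 < t0) :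
    ∫⁻ t in Ioi t0, ENNReal.ofReal (t ^ (-p1)) = ENNReal.ofReal (t0 ^ (1 - p1) / (p1 - 1)) := by
  have hlt : -p1 < -1 := by linarith
  rw [← ofReal_integral_eq_lintegral_ofReal (integrableOn_Ioi_rpow_of_lt hlt ht0)
    (((ae_restrict_iff' measurableSet_Ioi).2 (Filter.Eventually.of_forall
      fun t ht => Real.rpow_nonneg (le_of_lt (ht0.trans ht)) _)))]
  rw [integral_Ioi_rpow_of_lt hlt ht0]
  congr 1
  rw [show -p1 + 1 = -(p1 - 1) by ring, show t0 ^ (-(p1-1)) = t0 ^ (1-p1) by ring_nf]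
  rw [div_neg, neg_div, neg_neg]

lemma head_lintegral {r T : ℝ} (hr : -1 < r) (hT : 0 ≤ T) :
    ∫⁻ v in Ioc 0 T, ENNReal.ofReal (v ^ r) = ENNReal.ofReal (T ^ (r + 1) / (r + 1)) := by
  have hint : IntegrableOn (fun v : ℝ => v ^ r) (Ioc 0 T) volume :=
    (intervalIntegral.intervalIntegrable_rpow' hr (a := 0) (b := T)).1
  rw [← ofReal_integral_eq_lintegral_ofReal hint
    (((ae_restrict_iff' measurableSet_Ioc).2 (Filter.Eventually.of_forall
      fun v hv => Real.rpow_nonneg (le_of_lt hv.1) _)))]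
  congr 1
  rw [← intervalIntegral.integral_of_le hT, integral_rpow (Or.inl hr)]
  rw [Real.zero_rpow (by linarith : r + 1 ≠ 0), sub_zero]

lemma min_split {A B : ℝ≥0∞} {p1 t0 : ℝ} (hp1 : 1 < p1) (ht0 : 0 < t0) :
    ∫⁻ t in Ioi (0:ℝ), min A (B * ENNReal.ofReal (t ^ (-p1)))
      ≤ A * ENNReal.ofReal t0 + B * ENNReal.ofReal (t0 ^ (1 - p1) / (p1 - 1)) := by
  rw [← Ioc_union_Ioi_eq_Ioi ht0.le,
    lintegral_union measurableSet_Ioi (Ioc_disjoint_Ioi le_rfl)]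
  refine add_le_add ?_ ?_
  · calc ∫⁻ t in Ioc 0 t0, min A (B * ENNReal.ofReal (t ^ (-p1)))
        ≤ ∫⁻ _ in Ioc 0 t0, A := lintegral_mono fun t => min_le_left _ _
      _ = A * ENNReal.ofReal t0 := by
          rw [setLIntegral_const, Real.volume_Ioc, sub_zero]
  · calc ∫⁻ t in Ioi t0, min A (B * ENNReal.ofReal (t ^ (-p1)))
        ≤ ∫⁻ t in Ioi t0, B * ENNReal.ofReal (t ^ (-p1)) := lintegral_mono fun t => min_le_right _ _
      _ = B * ENNReal.ofReal (t0 ^ (1 - p1) / (p1 - 1)) := by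
          have m : Measurable fun t : ℝ => ENNReal.ofReal (t ^ (-p1)) :=
            ENNReal.measurable_ofReal.comp (measurable_id.pow_const _)
          rw [lintegral_const_mul _ m, tail_lintegral hp1 ht0]


lemma distFn_anti : Antitone (distFn N g) := fun _ _ hab =>
  measure_mono fun _ hx => lt_of_le_of_lt hab hx

lemma distFn_le_pow {t : ℝ} (ht : 0 < t) {p1 : ℝ} (hp1 : 0 < p1) :
    distFn N f t ≤ (weakNorm N f p1) ^ p1 * (ENNReal.ofReal t) ^ (-p1) := by
  have hW : ENNReal.ofReal t * (distFn N f t) ^ (1 / p1) ≤ weakNorm N f p1 := by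
    unfold weakNorm
    exact le_biSup (fun t => ENNReal.ofReal t * (distFn N f t) ^ (1 / p1)) (mem_Ioi.2 ht)
  have hx0 : (ENNReal.ofReal t) ≠ 0 := by simp [ht]
  have hxt : (ENNReal.ofReal t) ≠ ⊤ := ofReal_ne_top
  have h2 : distFn N f t * (ENNReal.ofReal t) ^ p1 ≤ (weakNorm N f p1) ^ p1 := by
    calc distFn N f t * (ENNReal.ofReal t) ^ p1
        = (ENNReal.ofReal t * (distFn N f t) ^ (1 / p1)) ^ p1 := by
          rw [ENNReal.mul_rpow_of_nonneg _ _ hp1.le, ← ENNReal.rpow_mul,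
            one_div, inv_mul_cancel₀ hp1.ne', ENNReal.rpow_one, mul_comm]
      _ ≤ (weakNorm N f p1) ^ p1 := ENNReal.rpow_le_rpow hW hp1.le
  calc distFn N f t = distFn N f t * ((ENNReal.ofReal t) ^ p1 * (ENNReal.ofReal t) ^ (-p1)) := by
        rw [← ENNReal.rpow_add _ _ hx0 hxt]; simp
    _ = distFn N f t * (ENNReal.ofReal t) ^ p1 * (ENNReal.ofReal t) ^ (-p1) := by rw [mul_assoc]
    _ ≤ (weakNorm N f p1) ^ p1 * (ENNReal.ofReal t) ^ (-p1) := by gcongr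

lemma cheb (hg : Measurable g) {u : ℝ} (hu : 0 < u) {p2 : ℝ} (hp2 : 0 < p2) :
    distFn N g u ≤ (∫⁻ x, (ENNReal.ofReal |g x|) ^ p2) * (ENNReal.ofReal u) ^ (-p2) := by
  have key : (ENNReal.ofReal u) ^ p2 * distFn N g u ≤ ∫⁻ x, (ENNReal.ofReal |g x|) ^ p2 := by
    refine le_trans ?_ (mul_meas_ge_le_lintegral₀
      ((ENNReal.measurable_ofReal.comp hg.abs).pow_const p2).aemeasurable
      ((ENNReal.ofReal u) ^ p2))
    refine mul_le_mul' le_rfl (measure_mono fun x hx => ?_)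
    exact ENNReal.rpow_le_rpow (ENNReal.ofReal_le_ofReal (le_of_lt hx)) hp2.le
  have hx0 : (ENNReal.ofReal u) ≠ 0 := by simp [hu]
  have hxt : (ENNReal.ofReal u) ≠ ⊤ := ofReal_ne_top
  calc distFn N g u = (ENNReal.ofReal u) ^ p2 * distFn N g u * (ENNReal.ofReal u) ^ (-p2) := by
        rw [mul_comm ((ENNReal.ofReal u) ^ p2), mul_assoc, ← ENNReal.rpow_add _ _ hx0 hxt]; simp
    _ ≤ (∫⁻ x, (ENNReal.ofReal |g x|) ^ p2) * (ENNReal.ofReal u) ^ (-p2) := by gcongr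

lemma layercake (hg : Measurable g) {p2 : ℝ} (hp2 : 0 < p2) :
    ∫⁻ u in Ioi (0:ℝ), distFn N g u * ENNReal.ofReal (u ^ (p2 - 1))
      = (∫⁻ x, (ENNReal.ofReal |g x|) ^ p2) / ENNReal.ofReal p2 := by
  have key := lintegral_rpow_eq_lintegral_meas_lt_mul (volume : Measure (EuclideanSpace ℝ (Fin N)))
    (Filter.Eventually.of_forall fun x => abs_nonneg (g x)) hg.abs.aemeasurable hp2
  have e1 : ∫⁻ x, ENNReal.ofReal (|g x| ^ p2) = ∫⁻ x, (ENNReal.ofReal |g x|) ^ p2 :=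
    lintegral_congr fun x => (ENNReal.ofReal_rpow_of_nonneg (abs_nonneg _) hp2.le).symm
  rw [e1] at key
  rw [ENNReal.eq_div_iff (by simp [hp2]) ofReal_ne_top, key]
  rfl

lemma elp (hg : Measurable g) {p2 : ℝ} (hp2 : 0 < p2) :
    eLpNorm g (ENNReal.ofReal p2) volume = (∫⁻ x, (ENNReal.ofReal |g x|) ^ p2) ^ (1 / p2) := by
  rw [eLpNorm_eq_lintegral_rpow_enorm_toReal (by simp [hp2]) ofReal_ne_top]
  rw [toReal_ofReal hp2.le]
  congr 1
  exact lintegral_congr fun x => by rw [Real.enorm_eq_ofReal_abs]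


lemma gen {W b c : ℝ≥0∞} {p1 : ℝ} (hp1 : 1 < p1) (hW0 : W ≠ 0) (hWt : W ≠ ⊤) (hc : c ≠ ⊤)
    (Jf : ℝ → ℝ≥0∞) (hJ1 : ∀ t, Jf t ≤ b * c)
    (hJ2 : ∀ t, 0 < t → Jf t ≤ b * (W ^ p1 * (ENNReal.ofReal t) ^ (-p1))) :
    ∫⁻ t in Ioi (0:ℝ), Jf t
      ≤ ENNReal.ofReal (p1 / (p1 - 1)) * W * (b * c ^ (1 - 1/p1)) := by
  by_cases hc0 : c = 0
  · have : ∀ t, Jf t = 0 := fun t => le_antisymm (by simpa [hc0] using hJ1 t) zero_le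
    simp [this]
  -- main case
  have hp1' : (0:ℝ) < p1 := by linarith
  have hWr : 0 < W.toReal := toReal_pos hW0 hWt
  have hcr : 0 < c.toReal := toReal_pos hc0 hc
  set t0 : ℝ := W.toReal * c.toReal ^ (-(1/p1)) with ht0def
  have ht0 : 0 < t0 := mul_pos hWr (Real.rpow_pos_of_pos hcr _)
  have step1 : ∫⁻ t in Ioi (0:ℝ), Jf t
      ≤ ∫⁻ t in Ioi (0:ℝ), min (b * c) ((b * W ^ p1) * ENNReal.ofReal (t ^ (-p1))) := by
    refine setLIntegral_mono' measurableSet_Ioi fun t ht => ?_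
    refine le_min (hJ1 t) ?_
    rw [mul_assoc]
    refine (hJ2 t ht).trans ?_
    rw [ENNReal.ofReal_rpow_of_pos ht]
  have step2 := min_split (A := b * c) (B := b * W ^ p1) hp1 ht0
  refine step1.trans (step2.trans ?_)
  -- now pure  algebra
  have e1 : ENNReal.ofReal t0 = W * c ^ (-(1/p1)) := by
    rw [ht0def, ENNReal.ofReal_mul toReal_nonneg, ofReal_toReal hWt,
      ← ENNReal.ofReal_rpow_of_pos hcr, ofReal_toReal hc]
  have hcne : c ^ (-(1/p1)) ≠ ⊤ := by
    simp [ENNReal.rpow_eq_top_iff, hc0, hc]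
  have hp1ne : p1 - 1 ≠ 0 := by linarith
  have T1 : b * c * ENNReal.ofReal t0 = W * (b * c ^ (1 - 1/p1)) := by
    rw [e1]
    have hcc : c * c ^ (-(1/p1)) = c ^ (1 - 1/p1) := by
      rw [show (1 : ℝ) - 1/p1 = 1 + (-(1/p1)) by ring, ENNReal.rpow_add _ _ hc0 hc,
        ENNReal.rpow_one]
    calc b * c * (W * c ^ (-(1/p1))) = W * (b * (c * c ^ (-(1/p1)))) := by ring
      _ = W * (b * c ^ (1 - 1/p1)) := by rw [hcc]
  have T2 : (b * W ^ p1) * ENNReal.ofReal (t0 ^ (1-p1) / (p1-1))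
      = ENNReal.ofReal ((p1-1)⁻¹) * W * (b * c ^ (1 - 1/p1)) := by
    have e2 : ENNReal.ofReal (t0 ^ (1-p1)) = W ^ (1-p1) * c ^ (1 - 1/p1) := by
      rw [← ENNReal.ofReal_rpow_of_pos ht0, e1, ENNReal.mul_rpow_of_ne_top hWt hcne]
      congr 1
      rw [← ENNReal.rpow_mul]
      congr 1
      field_simp
      ring
    have eW : W ^ p1 * W ^ (1-p1) = W := by
      rw [← ENNReal.rpow_add _ _ hW0 hWt]; simp
    calc (b * W ^ p1) * ENNReal.ofReal (t0 ^ (1-p1) / (p1-1))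
        = (b * W ^ p1) * (ENNReal.ofReal (t0 ^ (1-p1)) * ENNReal.ofReal ((p1-1)⁻¹)) := by
          rw [div_eq_mul_inv, ENNReal.ofReal_mul (Real.rpow_nonneg ht0.le _)]
      _ = (b * W ^ p1) * ((W ^ (1-p1) * c ^ (1 - 1/p1)) * ENNReal.ofReal ((p1-1)⁻¹)) := by
          rw [e2]
      _ = ENNReal.ofReal ((p1-1)⁻¹) * (W ^ p1 * W ^ (1-p1)) * (b * c ^ (1 - 1/p1)) := by ring
      _ = ENNReal.ofReal ((p1-1)⁻¹) * W * (b * c ^ (1 - 1/p1)) := by rw [eW]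
  rw [T1, T2]
  have efin : (1 : ℝ≥0∞) + ENNReal.ofReal ((p1-1)⁻¹) = ENNReal.ofReal (p1 / (p1-1)) := by
    rw [← ENNReal.ofReal_one, ← ENNReal.ofReal_add one_pos.le (inv_nonneg.2 (by linarith))]
    congr 1
    field_simp
    ring
  have final : W * (b * c ^ (1 - 1/p1)) + ENNReal.ofReal ((p1-1)⁻¹) * W * (b * c ^ (1 - 1/p1))
      = ENNReal.ofReal (p1 / (p1 - 1)) * W * (b * c ^ (1 - 1/p1)) := by
    rw [← efin]; ring
  exact le_of_eq final


lemma rpow_ofReal_ne_top {v : ℝ} (hv : 0 < v) (e : ℝ) : (ENNReal.ofReal v) ^ e ≠ ⊤ := by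
  intro hcon
  rw [ENNReal.rpow_eq_top_iff] at hcon
  rcases hcon with ⟨h0, _⟩ | ⟨ht, _⟩
  · rw [ofReal_eq_zero] at h0; linarith
  · exact ofReal_ne_top ht

lemma ofReal_toReal_rpow {x : ℝ≥0∞} (h0 : x ≠ 0) (ht : x ≠ ⊤) (e : ℝ) :
    ENNReal.ofReal (x.toReal ^ e) = x ^ e := by
  rw [← ENNReal.ofReal_rpow_of_pos (toReal_pos h0 ht), ofReal_toReal ht]

lemma main_case {N : ℕ} {f g h : EuclideanSpace ℝ (Fin N) → ℝ}
    (hf : Measurable f) (hg : Measurable g) (hh : Measurable h)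
    {p1 p2 p3 : ℝ} (h1 : 1 < p1) (h2 : 1 < p2) (h3 : 1 < p3)
    (hsum : 1 / p1 + 1 / p2 + 1 / p3 = 2)
    (hW0 : weakNorm N f p1 ≠ 0) (hWt : weakNorm N f p1 ≠ ⊤)
    (hIg0 : (∫⁻ x, (ENNReal.ofReal |g x|) ^ p2) ≠ 0)
    (hIgt : (∫⁻ x, (ENNReal.ofReal |g x|) ^ p2) ≠ ⊤)
    (hIh0 : (∫⁻ x, (ENNReal.ofReal |h x|) ^ p3) ≠ 0)
    (hIht : (∫⁻ x, (ENNReal.ofReal |h x|) ^ p3) ≠ ⊤) :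
    ∫⁻ x, (∫⁻ y, ENNReal.ofReal |f (x - y)| * ENNReal.ofReal |g y|) * ENNReal.ofReal |h x|
      ≤ ENNReal.ofReal (p1 / (p1-1) * ((1 - p2*(1-1/p1))⁻¹ * p3⁻¹ + (1 - p3*(1-1/p1))⁻¹ * p2⁻¹))
        * weakNorm N f p1
        * ((∫⁻ x, (ENNReal.ofReal |g x|) ^ p2) ^ (1/p2))
        * ((∫⁻ x, (ENNReal.ofReal |h x|) ^ p3) ^ (1/p3)) := by
  -- abbreviations
  set W := weakNorm N f p1 with hWdef
  set Ig := ∫⁻ x, (ENNReal.ofReal |g x|) ^ p2 with hIgdef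
  set Ih := ∫⁻ x, (ENNReal.ofReal |h x|) ^ p3 with hIhdef
  set σ := 1 - 1/p1 with hσdef
  set b : ℝ → ℝ≥0∞ := distFn N g with hbdef
  set c : ℝ → ℝ≥0∞ := distFn N h with hcdef
  set K1 := ENNReal.ofReal (p1 / (p1 - 1)) * W with hK1def
  -- numeric facts
  have hp10 : (0:ℝ) < p1 := by linarith
  have hp20 : (0:ℝ) < p2 := by linarith
  have hp30 : (0:ℝ) < p3 := by linarith
  have h1p2 : 1/p2 < 1 := by rw [div_lt_one hp20]; linarith
  have h1p3 : 1/p3 < 1 := by rw [div_lt_one hp30]; linarith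
  have h1p1pos : 0 < 1/p1 := by positivity
  have h1p2pos : 0 < 1/p2 := by positivity
  have h1p3pos : 0 < 1/p3 := by positivity
  have hσeq : σ = 1/p2 + 1/p3 - 1 := by rw [hσdef]; linarith
  have h1p1 : 1/p1 < 1 := by rw [div_lt_one hp10]; linarith
  have hσpos : 0 < σ := by rw [hσdef]; linarith
  have hσlt2 : σ < 1/p2 := by rw [hσeq]; linarith
  have hσlt3 : σ < 1/p3 := by rw [hσeq]; linarith
  have h2σ : p2 * σ < 1 := by
    calc p2 * σ < p2 * (1/p2) := by exact mul_lt_mul_of_pos_left hσlt2 hp20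
      _ = 1 := by field_simp
  have h3σ : p3 * σ < 1 := by
    calc p3 * σ < p3 * (1/p3) := by exact mul_lt_mul_of_pos_left hσlt3 hp30
      _ = 1 := by field_simp
  have h2σ0 : (0:ℝ) < 1 - p2 * σ := by linarith
  have h3σ0 : (0:ℝ) < 1 - p3 * σ := by linarith
  have id1 : (p3/p2) * (1 - p2*σ) = p3 - 1 := by
    rw [hσeq]; field_simp; ring
  have id2 : (p2/p3) * (1 - p3*σ) = p2 - 1 := by
    rw [hσeq]; field_simp; ring
  -- kappa and the splitting curve
  set κr : ℝ := Ih.toReal ^ (1/p3) * Ig.toReal ^ (-(1/p3)) with hκdef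
  have hIgr : 0 < Ig.toReal := toReal_pos hIg0 hIgt
  have hIhr : 0 < Ih.toReal := toReal_pos hIh0 hIht
  have hκ : 0 < κr := mul_pos (Real.rpow_pos_of_pos hIhr _) (Real.rpow_pos_of_pos hIgr _)
  set ψ : ℝ → ℝ := fun v => (v / κr) ^ (p3/p2) with hψdef
  have hψ0 : ∀ v, 0 < v → 0 < ψ v := fun v hv =>
    Real.rpow_pos_of_pos (div_pos hv hκ) _
  have hψlt : ∀ u v, 0 < v → ψ v < u → v ≤ κr * u ^ (p2/p3) := by
    intro u v hv hlt
    have hvκ : 0 < v / κr := div_pos hv hκ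
    have h1 : (ψ v) ^ (p2/p3) < u ^ (p2/p3) :=
      Real.rpow_lt_rpow (le_of_lt (hψ0 v hv)) hlt (by positivity)
    rw [hψdef] at h1
    rw [← Real.rpow_mul hvκ.le] at h1
    rw [div_mul_div_comm, mul_comm p3 p2, div_self (by positivity), Real.rpow_one] at h1
    rw [div_lt_iff₀ hκ] at h1
    linarith [h1]
  -- finiteness of distribution values
  have hbfin : ∀ u : ℝ, 0 < u → b u ≠ ⊤ := fun u hu =>
    ne_top_of_le_ne_top (ENNReal.mul_ne_top hIgt (rpow_ofReal_ne_top hu _)) (cheb hg hu hp20)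
  have hcfin : ∀ v : ℝ, 0 < v → c v ≠ ⊤ := fun v hv =>
    ne_top_of_le_ne_top (ENNReal.mul_ne_top hIht (rpow_ofReal_ne_top hv _)) (cheb hh hv hp30)
  -- Chebyshev with power σ
  have hbσ : ∀ u : ℝ, 0 < u → (b u) ^ σ ≤ Ig ^ σ * ENNReal.ofReal (u ^ (-(p2*σ))) := by
    intro u hu
    calc (b u) ^ σ ≤ (Ig * (ENNReal.ofReal u) ^ (-p2)) ^ σ :=
          ENNReal.rpow_le_rpow (cheb hg hu hp20) hσpos.le
      _ = Ig ^ σ * ((ENNReal.ofReal u) ^ (-p2)) ^ σ := ENNReal.mul_rpow_of_nonneg _ _ hσpos.le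
      _ = Ig ^ σ * (ENNReal.ofReal u) ^ (-(p2*σ)) := by
          rw [← ENNReal.rpow_mul]; ring_nf
      _ = Ig ^ σ * ENNReal.ofReal (u ^ (-(p2*σ))) := by
          rw [ENNReal.ofReal_rpow_of_pos hu]
  have hcσ : ∀ v : ℝ, 0 < v → (c v) ^ σ ≤ Ih ^ σ * ENNReal.ofReal (v ^ (-(p3*σ))) := by
    intro v hv
    calc (c v) ^ σ ≤ (Ih * (ENNReal.ofReal v) ^ (-p3)) ^ σ :=
          ENNReal.rpow_le_rpow (cheb hh hv hp30) hσpos.le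
      _ = Ih ^ σ * ((ENNReal.ofReal v) ^ (-p3)) ^ σ := ENNReal.mul_rpow_of_nonneg _ _ hσpos.le
      _ = Ih ^ σ * (ENNReal.ofReal v) ^ (-(p3*σ)) := by
          rw [← ENNReal.rpow_mul]; ring_nf
      _ = Ih ^ σ * ENNReal.ofReal (v ^ (-(p3*σ))) := by
          rw [ENNReal.ofReal_rpow_of_pos hv]
  -- Gamma bounds
  have hΓX : ∀ u v : ℝ, 0 < v → ∫⁻ t in Ioi (0:ℝ), J f g h t u v ≤ K1 * (b u * (c v) ^ σ) := by
    intro u v hv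
    rw [hK1def, mul_assoc (ENNReal.ofReal (p1 / (p1 - 1)))]
    rw [← mul_assoc]
    exact gen h1 hW0 hWt (hcfin v hv) _ (fun t => J_le_bc hg hh t u v)
      (fun t ht => by
        calc J f g h t u v ≤ distFn N f t * b u := J_le_ab hf hg t u v
          _ ≤ (W ^ p1 * (ENNReal.ofReal t) ^ (-p1)) * b u := by
              gcongr; exact distFn_le_pow ht hp10
          _ = b u * (W ^ p1 * (ENNReal.ofReal t) ^ (-p1)) := by ring)
  have hΓY : ∀ u v : ℝ, 0 < u → ∫⁻ t in Ioi (0:ℝ), J f g h t u v ≤ K1 * (c v * (b u) ^ σ) := by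
    intro u v hu
    rw [hK1def, mul_assoc (ENNReal.ofReal (p1 / (p1 - 1)))]
    rw [← mul_assoc]
    exact gen h1 hW0 hWt (hbfin u hu) _
      (fun t => (J_le_bc hg hh t u v).trans (le_of_eq (mul_comm _ _)))
      (fun t ht => by
        calc J f g h t u v ≤ distFn N f t * c v := J_le_ac hf hh t u v
          _ ≤ (W ^ p1 * (ENNReal.ofReal t) ^ (-p1)) * c v := by
              gcongr; exact distFn_le_pow ht hp10
          _ = c v * (W ^ p1 * (ENNReal.ofReal t) ^ (-p1)) := by ring)
  -- measurability of distribution functions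
  have mb : Measurable b := distFn_anti.measurable
  have mc : Measurable c := distFn_anti.measurable
  have mψ : Measurable ψ := (measurable_id.div_const κr).pow_const _
  -- the splitting pieces
  set X : ℝ → ℝ → ℝ≥0∞ := fun u v => (K1 * (c v * Ig ^ σ)) * ENNReal.ofReal (u ^ (-(p2*σ)))
    with hXdef
  set Y : ℝ → ℝ → ℝ≥0∞ := fun u v => (K1 * (b u * Ih ^ σ)) * ENNReal.ofReal (v ^ (-(p3*σ)))
    with hYdef
  set D1 : ℝ → ℝ → ℝ≥0∞ := fun u v => if u ≤ ψ v then X u v else 0 with hD1def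
  set D2 : ℝ → ℝ → ℝ≥0∞ := fun u v => if ψ v < u then Y u v else 0 with hD2def
  have hpoint : ∀ u v : ℝ, 0 < u → 0 < v →
      (∫⁻ t in Ioi (0:ℝ), J f g h t u v) ≤ D1 u v + D2 u v := by
    intro u v hu hv
    by_cases hcase : u ≤ ψ v
    · refine le_trans ?_ le_self_add
      rw [hD1def]; simp only [if_pos hcase]
      refine (hΓY u v hu).trans ?_
      calc K1 * (c v * (b u) ^ σ)
          ≤ K1 * (c v * (Ig ^ σ * ENNReal.ofReal (u ^ (-(p2*σ))))) := by
            gcongr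
            exact hbσ u hu
        _ = X u v := by rw [hXdef]; ring
    · refine le_trans ?_ le_add_self
      rw [hD2def]; simp only [if_pos (not_le.mp hcase)]
      refine (hΓX u v hv).trans ?_
      calc K1 * (b u * (c v) ^ σ)
          ≤ K1 * (b u * (Ih ^ σ * ENNReal.ofReal (v ^ (-(p3*σ))))) := by
            gcongr
            exact hcσ v hv
        _ = Y u v := by rw [hYdef]; ring
  -- joint measurability
  have mX : Measurable fun p : ℝ × ℝ => X p.2 p.1 :=
    (measurable_const.mul ((mc.comp measurable_fst).mul measurable_const)).mul
      (ENNReal.measurable_ofReal.comp ((measurable_snd.pow_const _)))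
  have mY : Measurable fun p : ℝ × ℝ => Y p.2 p.1 :=
    (measurable_const.mul ((mb.comp measurable_snd).mul measurable_const)).mul
      (ENNReal.measurable_ofReal.comp ((measurable_fst.pow_const _)))
  have mD1joint : Measurable fun p : ℝ × ℝ => D1 p.2 p.1 := by
    rw [hD1def]
    exact Measurable.ite (measurableSet_le measurable_snd (mψ.comp measurable_fst)) mX
      measurable_const
  have mD2joint : Measurable fun p : ℝ × ℝ => D2 p.2 p.1 := by
    rw [hD2def]
    exact Measurable.ite (measurableSet_lt (mψ.comp measurable_fst) measurable_snd) mY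
      measurable_const
  have mD1 : ∀ v, Measurable fun u => D1 u v := fun v =>
    mD1joint.comp (measurable_const.prodMk measurable_id)
  -- constants
  set CA := K1 * Ig ^ σ * ENNReal.ofReal (κr ^ (-(p3-1)) * (1 - p2*σ)⁻¹) with hCAdef
  set CB := K1 * Ih ^ σ * ENNReal.ofReal (κr ^ (1 - p3*σ) * (1 - p3*σ)⁻¹) with hCBdef
  -- bound for the D1 piece
  have boundA : (∫⁻ v in Ioi (0:ℝ), ∫⁻ u in Ioi (0:ℝ), D1 u v)
      ≤ CA * (Ih / ENNReal.ofReal p3) := by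
    have mrp : Measurable fun u : ℝ => ENNReal.ofReal (u ^ (-(p2*σ))) :=
      ENNReal.measurable_ofReal.comp (measurable_id.pow_const _)
    calc (∫⁻ v in Ioi (0:ℝ), ∫⁻ u in Ioi (0:ℝ), D1 u v)
        ≤ ∫⁻ v in Ioi (0:ℝ), CA * (c v * ENNReal.ofReal (v ^ (p3-1))) := by
          refine setLIntegral_mono' measurableSet_Ioi fun v hv => ?_
          have e1 : (fun u => D1 u v) = (Iic (ψ v)).indicator (fun u => X u v) := by
            funext u
            rw [hD1def]
            simp [Set.indicator_apply, Set.mem_Iic]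
          have eψ : (ψ v) ^ (-(p2*σ)+1) = v ^ (p3-1) * κr ^ (-(p3-1)) := by
            rw [hψdef]
            show ((v / κr) ^ (p3/p2)) ^ (-(p2*σ)+1) = _
            rw [← Real.rpow_mul (div_nonneg hv.le hκ.le),
              show (p3/p2) * (-(p2*σ)+1) = p3 - 1 from by rw [← id1]; ring,
              Real.div_rpow hv.le hκ.le, div_eq_mul_inv, ← Real.rpow_neg hκ.le]
          calc ∫⁻ u in Ioi (0:ℝ), D1 u v
              = ∫⁻ u in Ioc 0 (ψ v), X u v := by
                rw [e1, lintegral_indicator measurableSet_Iic,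
                  Measure.restrict_restrict measurableSet_Iic, Set.inter_comm,
                  Set.Ioi_inter_Iic]
            _ = (K1 * (c v * Ig ^ σ)) * ∫⁻ u in Ioc 0 (ψ v), ENNReal.ofReal (u ^ (-(p2*σ))) := by
                rw [hXdef, lintegral_const_mul _ mrp]
            _ = (K1 * (c v * Ig ^ σ)) *
                  ENNReal.ofReal ((ψ v) ^ (-(p2*σ)+1) / (-(p2*σ)+1)) := by
                rw [head_lintegral (by linarith : (-1:ℝ) < -(p2*σ)) (hψ0 v hv).le]
            _ = CA * (c v * ENNReal.ofReal (v ^ (p3-1))) := by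
                rw [eψ, show v ^ (p3-1) * κr ^ (-(p3-1)) / (-(p2*σ)+1)
                    = (κr ^ (-(p3-1)) * (1 - p2*σ)⁻¹) * v ^ (p3-1) from by ring,
                  ENNReal.ofReal_mul (mul_nonneg (Real.rpow_nonneg hκ.le _)
                    (inv_nonneg.2 h2σ0.le)), hCAdef]
                ring
            _ ≤ CA * (c v * ENNReal.ofReal (v ^ (p3-1))) := le_rfl
      _ = CA * ∫⁻ v in Ioi (0:ℝ), c v * ENNReal.ofReal (v ^ (p3-1)) := by
          have mint : Measurable fun v : ℝ => c v * ENNReal.ofReal (v ^ (p3-1)) :=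
            mc.mul ((measurable_id'.pow_const _).ennreal_ofReal)
          rw [lintegral_const_mul _ mint]
      _ = CA * (Ih / ENNReal.ofReal p3) := by rw [layercake hh hp30]
  -- bound for the D2 piece
  have boundB : (∫⁻ v in Ioi (0:ℝ), ∫⁻ u in Ioi (0:ℝ), D2 u v)
      ≤ CB * (Ig / ENNReal.ofReal p2) := by
    have mrp : Measurable fun v : ℝ => ENNReal.ofReal (v ^ (-(p3*σ))) :=
      ENNReal.measurable_ofReal.comp (measurable_id.pow_const _)
    have swap2 : (∫⁻ v in Ioi (0:ℝ), ∫⁻ u in Ioi (0:ℝ), D2 u v)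
        = ∫⁻ u in Ioi (0:ℝ), ∫⁻ v in Ioi (0:ℝ), D2 u v :=
      lintegral_lintegral_swap mD2joint.aemeasurable
    rw [swap2]
    calc ∫⁻ u in Ioi (0:ℝ), ∫⁻ v in Ioi (0:ℝ), D2 u v
        ≤ ∫⁻ u in Ioi (0:ℝ), CB * (b u * ENNReal.ofReal (u ^ (p2-1))) := by
          refine setLIntegral_mono' measurableSet_Ioi fun u hu => ?_
          have hωpos : 0 < κr * u ^ (p2/p3) := mul_pos hκ (Real.rpow_pos_of_pos hu _)
          have eω : (κr * u ^ (p2/p3)) ^ (-(p3*σ)+1) = u ^ (p2-1) * κr ^ (1 - p3*σ) := by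
            rw [Real.mul_rpow hκ.le (Real.rpow_nonneg hu.le _),
              ← Real.rpow_mul hu.le,
              show (p2/p3) * (-(p3*σ)+1) = p2 - 1 from by rw [← id2]; ring,
              show -(p3*σ)+1 = 1 - p3*σ from by ring]
            ring
          calc ∫⁻ v in Ioi (0:ℝ), D2 u v
              ≤ ∫⁻ v in Ioi (0:ℝ), (Iic (κr * u ^ (p2/p3))).indicator (fun v => Y u v) v := by
                refine setLIntegral_mono' measurableSet_Ioi fun v hv => ?_
                rw [hD2def]
                by_cases hcase : ψ v < u
                · simp only [if_pos hcase]
                  rw [Set.indicator_apply]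
                  simp only [Set.mem_Iic]
                  rw [if_pos (hψlt u v hv hcase)]
                · simp [if_neg hcase]
            _ = ∫⁻ v in Ioc 0 (κr * u ^ (p2/p3)), Y u v := by
                rw [lintegral_indicator measurableSet_Iic,
                  Measure.restrict_restrict measurableSet_Iic, Set.inter_comm,
                  Set.Ioi_inter_Iic]
            _ = (K1 * (b u * Ih ^ σ)) *
                  ∫⁻ v in Ioc 0 (κr * u ^ (p2/p3)), ENNReal.ofReal (v ^ (-(p3*σ))) := by
                rw [hYdef, lintegral_const_mul _ mrp]
            _ = (K1 * (b u * Ih ^ σ)) *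
                  ENNReal.ofReal ((κr * u ^ (p2/p3)) ^ (-(p3*σ)+1) / (-(p3*σ)+1)) := by
                rw [head_lintegral (by linarith : (-1:ℝ) < -(p3*σ)) hωpos.le]
            _ = CB * (b u * ENNReal.ofReal (u ^ (p2-1))) := by
                rw [eω, show u ^ (p2-1) * κr ^ (1 - p3*σ) / (-(p3*σ)+1)
                    = (κr ^ (1 - p3*σ) * (1 - p3*σ)⁻¹) * u ^ (p2-1) from by
                      rw [show -(p3*σ)+1 = 1 - p3*σ from by ring]; ring,
                  ENNReal.ofReal_mul (mul_nonneg (Real.rpow_nonneg hκ.le _)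
                    (inv_nonneg.2 h3σ0.le)), hCBdef]
                ring
            _ ≤ CB * (b u * ENNReal.ofReal (u ^ (p2-1))) := le_rfl
      _ = CB * ∫⁻ u in Ioi (0:ℝ), b u * ENNReal.ofReal (u ^ (p2-1)) := by
          have mint : Measurable fun u : ℝ => b u * ENNReal.ofReal (u ^ (p2-1)) :=
            mb.mul ((measurable_id'.pow_const _).ennreal_ofReal)
          rw [lintegral_const_mul _ mint]
      _ = CB * (Ig / ENNReal.ofReal p2) := by rw [layercake hg hp20]
  -- convert kappa powers
  have eκ1 : ENNReal.ofReal (κr ^ (-(p3-1))) = Ih ^ (1/p3 - 1) * Ig ^ (1 - 1/p3) := by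
    rw [hκdef, Real.mul_rpow (Real.rpow_nonneg hIhr.le _) (Real.rpow_nonneg hIgr.le _),
      ← Real.rpow_mul hIhr.le, ← Real.rpow_mul hIgr.le,
      show (1/p3) * (-(p3-1)) = 1/p3 - 1 from by field_simp; ring,
      show (-(1/p3)) * (-(p3-1)) = 1 - 1/p3 from by field_simp,
      ENNReal.ofReal_mul (Real.rpow_nonneg hIhr.le _),
      ofReal_toReal_rpow hIh0 hIht, ofReal_toReal_rpow hIg0 hIgt]
  have eκ2 : ENNReal.ofReal (κr ^ (1 - p3*σ)) = Ih ^ (1 - 1/p2) * Ig ^ (1/p2 - 1) := by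
    rw [hκdef, Real.mul_rpow (Real.rpow_nonneg hIhr.le _) (Real.rpow_nonneg hIgr.le _),
      ← Real.rpow_mul hIhr.le, ← Real.rpow_mul hIgr.le,
      show (1/p3) * (1 - p3*σ) = 1 - 1/p2 from by rw [hσeq]; field_simp; ring,
      show (-(1/p3)) * (1 - p3*σ) = 1/p2 - 1 from by rw [hσeq]; field_simp; ring,
      ENNReal.ofReal_mul (Real.rpow_nonneg hIhr.le _),
      ofReal_toReal_rpow hIh0 hIht, ofReal_toReal_rpow hIg0 hIgt]
  -- power combination
  have EIg1 : Ig ^ σ * Ig ^ (1 - 1/p3) = Ig ^ (1/p2) := by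
    rw [← ENNReal.rpow_add _ _ hIg0 hIgt]; congr 1; rw [hσeq]; ring
  have EIh1 : Ih ^ (1/p3 - 1) * Ih = Ih ^ (1/p3) := by
    have h0 : Ih ^ (1/p3 - 1) * Ih ^ (1:ℝ) = Ih ^ (1/p3) := by
      rw [← ENNReal.rpow_add _ _ hIh0 hIht]; congr 1; ring
    rwa [ENNReal.rpow_one] at h0
  have EIh2 : Ih ^ σ * Ih ^ (1 - 1/p2) = Ih ^ (1/p3) := by
    rw [← ENNReal.rpow_add _ _ hIh0 hIht]; congr 1; rw [hσeq]; ring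
  have EIg2 : Ig ^ (1/p2 - 1) * Ig = Ig ^ (1/p2) := by
    have h0 : Ig ^ (1/p2 - 1) * Ig ^ (1:ℝ) = Ig ^ (1/p2) := by
      rw [← ENNReal.rpow_add _ _ hIg0 hIgt]; congr 1; ring
    rwa [ENNReal.rpow_one] at h0
  -- final equalities
  have EqA : CA * (Ih / ENNReal.ofReal p3)
      = ENNReal.ofReal (p1/(p1-1) * ((1 - p2*σ)⁻¹ * p3⁻¹)) * W * Ig ^ (1/p2) * Ih ^ (1/p3) := by
    rw [hCAdef, hK1def, ENNReal.div_eq_inv_mul, ← ENNReal.ofReal_inv_of_pos hp30,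
      ENNReal.ofReal_mul (Real.rpow_nonneg hκ.le _), eκ1,
      ENNReal.ofReal_mul (div_nonneg hp10.le (by linarith : (0:ℝ) ≤ p1 - 1)),
      ENNReal.ofReal_mul (inv_nonneg.2 h2σ0.le),
      ← EIg1, ← EIh1]
    ring
  have EqB : CB * (Ig / ENNReal.ofReal p2)
      = ENNReal.ofReal (p1/(p1-1) * ((1 - p3*σ)⁻¹ * p2⁻¹)) * W * Ig ^ (1/p2) * Ih ^ (1/p3) := by
    rw [hCBdef, hK1def, ENNReal.div_eq_inv_mul, ← ENNReal.ofReal_inv_of_pos hp20,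
      ENNReal.ofReal_mul (Real.rpow_nonneg hκ.le _), eκ2,
      ENNReal.ofReal_mul (div_nonneg hp10.le (by linarith : (0:ℝ) ≤ p1 - 1)),
      ENNReal.ofReal_mul (inv_nonneg.2 h3σ0.le),
      ← EIg2, ← EIh2]
    ring
  -- main chain
  calc ∫⁻ x, (∫⁻ y, ENNReal.ofReal |f (x - y)| * ENNReal.ofReal |g y|) * ENNReal.ofReal |h x|
      = ∫⁻ v in Ioi (0:ℝ), ∫⁻ u in Ioi (0:ℝ), ∫⁻ t in Ioi (0:ℝ), J f g h t u v :=
        exp hf hg hh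
    _ ≤ ∫⁻ v in Ioi (0:ℝ), ∫⁻ u in Ioi (0:ℝ), (D1 u v + D2 u v) := by
        refine setLIntegral_mono' measurableSet_Ioi fun v hv => ?_
        exact setLIntegral_mono' measurableSet_Ioi fun u hu => hpoint u v hu hv
    _ = (∫⁻ v in Ioi (0:ℝ), ∫⁻ u in Ioi (0:ℝ), D1 u v)
        + ∫⁻ v in Ioi (0:ℝ), ∫⁻ u in Ioi (0:ℝ), D2 u v := by
        rw [← lintegral_add_left mD1joint.lintegral_prod_right']
        exact lintegral_congr fun v => lintegral_add_left (mD1 v) _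
    _ ≤ CA * (Ih / ENNReal.ofReal p3) + CB * (Ig / ENNReal.ofReal p2) := add_le_add boundA boundB
    _ = ENNReal.ofReal (p1/(p1-1) * ((1 - p2*σ)⁻¹ * p3⁻¹ + (1 - p3*σ)⁻¹ * p2⁻¹))
        * W * Ig ^ (1/p2) * Ih ^ (1/p3) := by
        rw [EqA, EqB, show p1/(p1-1) * ((1 - p2*σ)⁻¹ * p3⁻¹ + (1 - p3*σ)⁻¹ * p2⁻¹)
            = p1/(p1-1) * ((1 - p2*σ)⁻¹ * p3⁻¹) + p1/(p1-1) * ((1 - p3*σ)⁻¹ * p2⁻¹) from by ring,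
          ENNReal.ofReal_add
            (mul_nonneg (div_nonneg hp10.le (by linarith : (0:ℝ) ≤ p1 - 1))
              (mul_nonneg (inv_nonneg.2 h2σ0.le) (inv_nonneg.2 hp30.le)))
            (mul_nonneg (div_nonneg hp10.le (by linarith : (0:ℝ) ≤ p1 - 1))
              (mul_nonneg (inv_nonneg.2 h3σ0.le) (inv_nonneg.2 hp20.le)))]
        ring



end WY

open WY in
theorem stmt_10 (N : ℕ) (p1 p2 p3 : ℝ) (h1 : 1 < p1) (h2 : 1 < p2) (h3 : 1 < p3)
    (hsum : 1 / p1 + 1 / p2 + 1 / p3 = 2) :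
    ∃ C : ℝ, 0 < C ∧ ∀ f g h : EuclideanSpace ℝ (Fin N) → ℝ,
      Measurable f → Measurable g → Measurable h →
      ∫⁻ x, (∫⁻ y, ENNReal.ofReal |f (x - y)| * ENNReal.ofReal |g y|) * ENNReal.ofReal |h x| ≤
        ENNReal.ofReal C * weakNorm N f p1 * eLpNorm g (ENNReal.ofReal p2) volume *
          eLpNorm h (ENNReal.ofReal p3) volume := by
  have hp10 : (0:ℝ) < p1 := by linarith
  have hp20 : (0:ℝ) < p2 := by linarith
  have hp30 : (0:ℝ) < p3 := by linarith
  have h1p1 : 1/p1 < 1 := by rw [div_lt_one hp10]; linarith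
  have h1p2 : 1/p2 < 1 := by rw [div_lt_one hp20]; linarith
  have h1p3 : 1/p3 < 1 := by rw [div_lt_one hp30]; linarith
  have hσpos : 0 < 1 - 1/p1 := by linarith
  have hσeq : 1 - 1/p1 = 1/p2 + 1/p3 - 1 := by linarith
  have h2σ : p2 * (1 - 1/p1) < 1 := by
    calc p2 * (1 - 1/p1) < p2 * (1/p2) := by
          apply mul_lt_mul_of_pos_left _ hp20
          rw [hσeq]; linarith
      _ = 1 := by field_simp
  have h3σ : p3 * (1 - 1/p1) < 1 := by
    calc p3 * (1 - 1/p1) < p3 * (1/p3) := by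
          apply mul_lt_mul_of_pos_left _ hp30
          rw [hσeq]; linarith
      _ = 1 := by field_simp
  refine ⟨p1 / (p1-1) * ((1 - p2*(1-1/p1))⁻¹ * p3⁻¹ + (1 - p3*(1-1/p1))⁻¹ * p2⁻¹), ?_, ?_⟩
  · have c1 : 0 < (1 - p2*(1-1/p1))⁻¹ * p3⁻¹ :=
      mul_pos (inv_pos.2 (by linarith)) (inv_pos.2 hp30)
    have c2 : 0 < (1 - p3*(1-1/p1))⁻¹ * p2⁻¹ :=
      mul_pos (inv_pos.2 (by linarith)) (inv_pos.2 hp20)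
    have : 0 < p1 / (p1 - 1) := div_pos hp10 (by linarith)
    positivity
  intro f g h hf hg hh
  rw [elp hg hp20, elp hh hp30]
  set W := weakNorm N f p1 with hWdef
  set Ig := ∫⁻ x, (ENNReal.ofReal |g x|) ^ p2 with hIgdef
  set Ih := ∫⁻ x, (ENNReal.ofReal |h x|) ^ p3 with hIhdef
  -- degenerate cases
  by_cases hg0 : Ig = 0
  · have hgz : ∀ᵐ y, ENNReal.ofReal |g y| = 0 := by
      have h0 : (fun y => (ENNReal.ofReal |g y|) ^ p2) =ᵐ[volume] 0 :=
        (lintegral_eq_zero_iff ((hg.abs.ennreal_ofReal).pow_const p2)).1 hg0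
      refine h0.mono fun y hy => ?_
      simp only [Pi.zero_apply] at hy
      rcases (ENNReal.rpow_eq_zero_iff).1 hy with ⟨h,_⟩|⟨h,hneg⟩
      · exact h
      · exact absurd hneg (by linarith)
    have inner0 : ∀ x : EuclideanSpace ℝ (Fin N),
        ∫⁻ y, ENNReal.ofReal |f (x - y)| * ENNReal.ofReal |g y| = 0 := by
      intro x
      rw [show (0:ℝ≥0∞) = ∫⁻ _ : EuclideanSpace ℝ (Fin N), 0 from (lintegral_zero).symm]
      refine lintegral_congr_ae (hgz.mono fun y hy => ?_)
      simp [hy]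
    simp only [inner0, zero_mul, lintegral_zero]
    exact zero_le
  by_cases hh0 : Ih = 0
  · have hhz : ∀ᵐ x, ENNReal.ofReal |h x| = 0 := by
      have h0 : (fun x => (ENNReal.ofReal |h x|) ^ p3) =ᵐ[volume] 0 :=
        (lintegral_eq_zero_iff ((hh.abs.ennreal_ofReal).pow_const p3)).1 hh0
      refine h0.mono fun x hx => ?_
      simp only [Pi.zero_apply] at hx
      rcases (ENNReal.rpow_eq_zero_iff).1 hx with ⟨hz,_⟩|⟨hz,hneg⟩
      · exact hz
      · exact absurd hneg (by linarith)
    have : ∫⁻ x, (∫⁻ y, ENNReal.ofReal |f (x - y)| * ENNReal.ofReal |g y|)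
        * ENNReal.ofReal |h x| = 0 := by
      rw [show (0:ℝ≥0∞) = ∫⁻ _ : EuclideanSpace ℝ (Fin N), 0 from (lintegral_zero).symm]
      refine lintegral_congr_ae (hhz.mono fun x hx => ?_)
      simp [hx]
    rw [this]
    exact zero_le
  by_cases hW0 : W = 0
  · have hdist : ∀ t : ℝ, 0 < t → distFn N f t = 0 := by
      intro t ht
      have hle : ENNReal.ofReal t * (distFn N f t) ^ (1/p1) ≤ W := by
        rw [hWdef]
        unfold weakNorm
        exact le_biSup (fun t => ENNReal.ofReal t * (distFn N f t) ^ (1 / p1)) (mem_Ioi.2 ht)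
      rw [hW0] at hle
      have h0 : ENNReal.ofReal t * (distFn N f t) ^ (1/p1) = 0 := le_antisymm hle zero_le
      rcases mul_eq_zero.1 h0 with hc | hc
      · exact absurd hc (by simp [ht])
      · rcases ENNReal.rpow_eq_zero_iff.1 hc with ⟨hz,_⟩|⟨_,hneg⟩
        · exact hz
        · exact absurd hneg (not_lt.2 (by positivity))
    have hfz : volume ((f ⁻¹' {0})ᶜ) = 0 := by
      have hsub : ((f ⁻¹' {0})ᶜ : Set (EuclideanSpace ℝ (Fin N)))
          ⊆ ⋃ n : ℕ, {z | 1/((n:ℝ)+1) < |f z|} := by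
        intro z hz
        have habs : 0 < |f z| := abs_pos.2 hz
        obtain ⟨n, hn⟩ := exists_nat_one_div_lt habs
        exact mem_iUnion.2 ⟨n, hn⟩
      refine measure_mono_null hsub (measure_iUnion_null fun n => ?_)
      exact hdist _ (one_div_pos.2 (by positivity))
    have inner0 : ∀ x : EuclideanSpace ℝ (Fin N),
        ∫⁻ y, ENNReal.ofReal |f (x - y)| * ENNReal.ofReal |g y| = 0 := by
      intro x
      have hpre : volume {y : EuclideanSpace ℝ (Fin N) | f (x - y) ≠ 0} = 0 := by
        have : {y : EuclideanSpace ℝ (Fin N) | f (x - y) ≠ 0}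
            = (fun y => x - y) ⁻¹' ((f ⁻¹' {0})ᶜ) := rfl
        rw [this, (Measure.measurePreserving_sub_left volume x).measure_preimage
          ((hf (measurableSet_singleton 0)).compl.nullMeasurableSet)]
        exact hfz
      have hae : ∀ᵐ y, f (x - y) = 0 := by
        rw [ae_iff]
        exact hpre
      rw [show (0:ℝ≥0∞) = ∫⁻ _ : EuclideanSpace ℝ (Fin N), 0 from (lintegral_zero).symm]
      refine lintegral_congr_ae (hae.mono fun y hy => ?_)
      simp [hy]
    simp only [inner0, zero_mul, lintegral_zero]
    exact zero_le
  -- infinite cases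
  have hIgp0 : Ig ^ (1/p2) ≠ 0 := by
    simp only [ne_eq, ENNReal.rpow_eq_zero_iff, not_or]
    constructor
    · rintro ⟨hz, _⟩; exact hg0 hz
    · rintro ⟨_, hneg⟩
      have : (0:ℝ) < 1/p2 := by positivity
      linarith
  have hIhp0 : Ih ^ (1/p3) ≠ 0 := by
    simp only [ne_eq, ENNReal.rpow_eq_zero_iff, not_or]
    constructor
    · rintro ⟨hz, _⟩; exact hh0 hz
    · rintro ⟨_, hneg⟩
      have : (0:ℝ) < 1/p3 := by positivity
      linarith
  have hCne : ENNReal.ofReal (p1 / (p1-1) * ((1 - p2*(1-1/p1))⁻¹ * p3⁻¹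
      + (1 - p3*(1-1/p1))⁻¹ * p2⁻¹)) ≠ 0 := by
    simp only [ne_eq, ofReal_eq_zero, not_le]
    have c1 : 0 < (1 - p2*(1-1/p1))⁻¹ * p3⁻¹ :=
      mul_pos (inv_pos.2 (by linarith)) (inv_pos.2 hp30)
    have c2 : 0 < (1 - p3*(1-1/p1))⁻¹ * p2⁻¹ :=
      mul_pos (inv_pos.2 (by linarith)) (inv_pos.2 hp20)
    have : 0 < p1 / (p1 - 1) := div_pos hp10 (by linarith)
    positivity
  by_cases hWt : W = ⊤
  · refine le_top.trans (le_of_eq ?_)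
    rw [hWt, ENNReal.mul_top hCne, ENNReal.top_mul hIgp0, ENNReal.top_mul hIhp0]
  by_cases hgt : Ig = ⊤
  · refine le_top.trans (le_of_eq ?_)
    rw [hgt, ENNReal.top_rpow_of_pos (by positivity : (0:ℝ) < 1/p2),
      ENNReal.mul_top (mul_ne_zero hCne hW0), ENNReal.top_mul hIhp0]
  by_cases hht : Ih = ⊤
  · refine le_top.trans (le_of_eq ?_)
    rw [hht, ENNReal.top_rpow_of_pos (by positivity : (0:ℝ) < 1/p3),
      ENNReal.mul_top (mul_ne_zero (mul_ne_zero hCne hW0) hIgp0)]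
  -- main case
  exact main_case hf hg hh h1 h2 h3 hsum hW0 hWt hg0 hgt hh0 hht
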